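/- Let J = [[−ρQ, −R],[Rᵀ, 0]] with Q symmetric PSD, ρ > 0, and N(Q) ⊆ N(Rᵀ). Let T_D, T_G have orthonormal columns spanning C(Q) and C(RᵀR) respectively, and suppose T_DᵀQT_D = Λ_D is positive definite and T_DᵀRT_G has full column rank. Then the projected matrix J' = [[−ρΛ_D, −T_DᵀRT_G],[T_GᵀRᵀT_D, 0]] is Hurwitz. -/

import Mathlib

open Matrix
open Complex

lemma auxInj {k l : ℕ} (M : Matrix (Fin k) (Fin l) ℝ)
    (hinj : Function.Injective M.mulVec) (y : Fin l → ℂ)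
    (h : (M.map Complex.ofReal) *ᵥ y = 0) : y = 0 := by
  have hre : M *ᵥ (fun j => (y j).re) = 0 := by
    funext i
    have h1 := congrArg Complex.re (congrFun h i)
    simp only [mulVec, dotProduct, Matrix.map_apply, Complex.re_sum, Complex.re_ofReal_mul,
      Pi.zero_apply, Complex.zero_re] at h1
    simpa [mulVec, dotProduct] using h1
  have him : M *ᵥ (fun j => (y j).im) = 0 := by
    funext i
    have h1 := congrArg Complex.im (congrFun h i)
    simp only [mulVec, dotProduct, Matrix.map_apply, Complex.im_sum, Complex.im_ofReal_mul,
      Pi.zero_apply, Complex.zero_im] at h1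
    simpa [mulVec, dotProduct] using h1
  have h2 : (fun j => (y j).re) = 0 := hinj (by rw [hre, mulVec_zero])
  have h3 : (fun j => (y j).im) = 0 := hinj (by rw [him, mulVec_zero])
  funext j
  exact Complex.ext (congrFun h2 j) (congrFun h3 j)

lemma auxPos {k : ℕ} {A : Matrix (Fin k) (Fin k) ℝ} (hA : A.PosDef) (x : Fin k → ℂ)
    (hx : x ≠ 0) : 0 < (star x ⬝ᵥ ((A.map Complex.ofReal) *ᵥ x)).re := by
  set a : Fin k → ℝ := fun i => (x i).re with ha
  set b : Fin k → ℝ := fun i => (x i).im with hb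
  have key : (star x ⬝ᵥ ((A.map Complex.ofReal) *ᵥ x)).re
      = a ⬝ᵥ (A *ᵥ a) + b ⬝ᵥ (A *ᵥ b) := by
    simp only [dotProduct, mulVec, Matrix.map_apply, Pi.star_apply, Complex.re_sum,
      Finset.mul_sum, ← Finset.sum_add_distrib]
    refine Finset.sum_congr rfl fun i _ => ?_
    refine Finset.sum_congr rfl fun j _ => ?_
    simp [Complex.mul_re, Complex.mul_im, ha, hb]
  rw [key]
  have hab : a ≠ 0 ∨ b ≠ 0 := by
    by_contra hc
    push_neg at hc
    apply hx
    funext i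
    exact Complex.ext (congrFun hc.1 i) (congrFun hc.2 i)
  have h1 : ∀ c : Fin k → ℝ, 0 ≤ c ⬝ᵥ (A *ᵥ c) := fun c => by
    simpa using hA.posSemidef.dotProduct_mulVec_nonneg c
  have h2 : ∀ c : Fin k → ℝ, c ≠ 0 → 0 < c ⬝ᵥ (A *ᵥ c) := fun c hc => by
    simpa using hA.dotProduct_mulVec_pos hc
  rcases hab with h | h
  · linarith [h2 a h, h1 b]
  · linarith [h1 a, h2 b h]

lemma auxSelf {k : ℕ} (x : Fin k → ℂ) :
    (star x ⬝ᵥ x).im = 0 ∧ 0 ≤ (star x ⬝ᵥ x).re ∧ ((x ≠ 0) → 0 < (star x ⬝ᵥ x).re) := by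
  have h : star x ⬝ᵥ x = ((∑ i, Complex.normSq (x i) : ℝ) : ℂ) := by
    simp [dotProduct, Complex.ofReal_sum]
    refine Finset.sum_congr rfl fun i _ => ?_
    rw [mul_comm, Complex.mul_conj]
  constructor
  · rw [h]; simp
  constructor
  · rw [h]; rw [Complex.ofReal_re]
    exact Finset.sum_nonneg fun i _ => Complex.normSq_nonneg _
  · intro hx
    rw [h]; simp only [Complex.ofReal_re]
    have : ∃ i, x i ≠ 0 := by
      by_contra hc; push_neg at hc; exact hx (funext hc)
    obtain ⟨i, hi⟩ := this
    have : 0 < Complex.normSq (x i) := Complex.normSq_pos.2 hi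
    have hnn : ∀ j, 0 ≤ Complex.normSq (x j) := fun j => Complex.normSq_nonneg _
    exact Finset.sum_pos' (fun j _ => hnn j) ⟨i, Finset.mem_univ i, this⟩

/-- The projected Jacobian `J' = [[−ρΛ_D, −T_Dᵀ R T_G], [T_Gᵀ Rᵀ T_D, 0]]` appearing in the
SGP μ-WGAN stability proof is Hurwitz: if `Q` is symmetric PSD with `N(Q) ⊆ N(Rᵀ)`, `T_D` and
`T_G` have orthonormal columns spanning `C(Q)` and `C(RᵀR)` respectively, `Λ_D = T_Dᵀ Q T_D`
is positive definite and `T_Dᵀ R T_G` has full column rank, then all eigenvalues of `J'` have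
strictly negative real part. -/
theorem stmt19 {n m kD kG : ℕ} (ρ : ℝ) (hρ : 0 < ρ)
    (Q : Matrix (Fin n) (Fin n) ℝ) (hQ : Q.PosSemidef)
    (R : Matrix (Fin n) (Fin m) ℝ)
    (hNull : ∀ u : Fin n → ℝ, Q.mulVec u = 0 → Rᵀ.mulVec u = 0)
    (TD : Matrix (Fin n) (Fin kD) ℝ) (hTDo : TDᵀ * TD = 1)
    (hTDr : LinearMap.range TD.mulVecLin = LinearMap.range Q.mulVecLin)
    (TG : Matrix (Fin m) (Fin kG) ℝ) (hTGo : TGᵀ * TG = 1)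
    (hTGr : LinearMap.range TG.mulVecLin = LinearMap.range (Rᵀ * R).mulVecLin)
    (hΛ : (TDᵀ * Q * TD).PosDef)
    (hfull : Function.Injective (TDᵀ * R * TG).mulVec) :
    ∀ μ ∈ spectrum ℂ
      ((Matrix.fromBlocks (-ρ • (TDᵀ * Q * TD)) (-(TDᵀ * R * TG)) (TGᵀ * Rᵀ * TD)
        (0 : Matrix (Fin kG) (Fin kG) ℝ)).map Complex.ofReal),
      μ.re < 0 := by
  intro μ hμ
  set A := TDᵀ * Q * TD with hAdef
  set B := TDᵀ * R * TG with hBdef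
  have hBL : TGᵀ * Rᵀ * TD = Bᵀ := by
    rw [hBdef]; simp [Matrix.transpose_mul, Matrix.mul_assoc]
  clear_value A B
  clear hTDr hTGr hNull hQ hTDo hTGo hAdef hBdef
  set A' := A.map (Complex.ofReal) with hA'
  set B' := B.map (Complex.ofReal) with hB'
  set Mc := (Matrix.fromBlocks (-ρ • A) (-B) (TGᵀ * Rᵀ * TD)
      (0 : Matrix (Fin kG) (Fin kG) ℝ)).map Complex.ofReal with hMc
  have hmap : Mc = Matrix.fromBlocks (-(ρ:ℂ) • A') (-B') (B'ᵀ)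
      (0 : Matrix (Fin kG) (Fin kG) ℂ) := by
    have e1 : ((-ρ) • A).map Complex.ofReal = -(ρ:ℂ) • A' := by
      ext i j
      simp [Matrix.map_apply, hA', Matrix.smul_apply]
    have e2 : (-B).map Complex.ofReal = -B' := by
      ext i j; simp [Matrix.map_apply, hB']
    have e3 : (Bᵀ).map Complex.ofReal = B'ᵀ := by
      ext i j; simp [Matrix.map_apply, hB']
    have e4 : (0 : Matrix (Fin kG) (Fin kG) ℝ).map Complex.ofReal
        = (0 : Matrix (Fin kG) (Fin kG) ℂ) := by
      ext i j; simp [Matrix.map_apply]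
    rw [hMc, hBL, Matrix.fromBlocks_map, e1, e2, e3, e4]
  rw [spectrum.mem_iff] at hμ
  have hdet : ((algebraMap ℂ (Matrix (Fin kD ⊕ Fin kG) (Fin kD ⊕ Fin kG) ℂ) μ) - Mc).det = 0 := by
    by_contra hd
    exact hμ ((Matrix.isUnit_iff_isUnit_det _).2 (isUnit_iff_ne_zero.2 hd))
  obtain ⟨v, hv0, hv⟩ := (Matrix.exists_mulVec_eq_zero_iff).2 hdet
  have hMv : Mc *ᵥ v = μ • v := by
    have h1 := hv
    rw [Matrix.sub_mulVec] at h1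
    have h2 : (algebraMap ℂ (Matrix (Fin kD ⊕ Fin kG) (Fin kD ⊕ Fin kG) ℂ) μ) *ᵥ v = μ • v := by
      rw [Algebra.algebraMap_eq_smul_one, Matrix.smul_mulVec, Matrix.one_mulVec]
    rw [h2] at h1
    have := sub_eq_zero.mp h1
    exact this.symm
  set x : Fin kD → ℂ := v ∘ Sum.inl with hxdef
  set y : Fin kG → ℂ := v ∘ Sum.inr with hydef
  have hvsplit : v = Sum.elim x y := by funext i; cases i <;> rfl
  rw [hmap, hvsplit, Matrix.fromBlocks_mulVec] at hMv
  have E1 : (-(ρ:ℂ) • A') *ᵥ x + (-B') *ᵥ y = μ • x := by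
    funext i
    simpa using congrFun hMv (Sum.inl i)
  have E2 : B'ᵀ *ᵥ x = μ • y := by
    funext i
    simpa using congrFun hMv (Sum.inr i)
  by_cases hx : x = 0
  · have hy : B' *ᵥ y = 0 := by
      have h1 := E1
      rw [hx] at h1
      simp only [Matrix.mulVec_zero, smul_zero, zero_add, Matrix.neg_mulVec] at h1
      simpa using h1
    have hy0 : y = 0 := auxInj B hfull y (by rw [← hB']; exact hy)
    exact absurd (by rw [hvsplit, hx, hy0]; funext i; cases i <;> simp) hv0
  · set cA := star x ⬝ᵥ (A' *ᵥ x) with hcA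
    set c := star x ⬝ᵥ (B' *ᵥ y) with hc
    set d := star y ⬝ᵥ (B'ᵀ *ᵥ x) with hd
    set nx := star x ⬝ᵥ x with hnx
    set ny := star y ⬝ᵥ y with hny
    have d1 : -(ρ:ℂ) * cA - c = μ * nx := by
      have := congrArg (fun w => star x ⬝ᵥ w) E1
      simpa [Matrix.smul_mulVec, Matrix.neg_mulVec, dotProduct_add, dotProduct_smul,
        dotProduct_neg, smul_eq_mul, sub_eq_add_neg, ← hcA, ← hc, ← hnx] using this
    have d2 : d = μ * ny := by
      have := congrArg (fun w => star y ⬝ᵥ w) E2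
      simpa [dotProduct_smul, smul_eq_mul, ← hd, ← hny] using this
    have hstar : c = star d := by
      rw [hc, hd, hB']
      simp only [dotProduct, Matrix.mulVec, dotProduct, Matrix.transpose_apply,
        Matrix.map_apply, Pi.star_apply, Finset.mul_sum, star_sum, star_mul']
      conv_rhs => rw [Finset.sum_comm]
      refine Finset.sum_congr rfl fun i _ => Finset.sum_congr rfl fun j _ => ?_
      simp only [Complex.star_def, Complex.conj_ofReal, RingHomCompTriple.comp_apply,
        RingHom.id_apply, Complex.conj_conj]
      ring
    have hnxim : nx.im = 0 := (auxSelf x).1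
    have hnyim : ny.im = 0 := (auxSelf y).1
    have hnxre : 0 < nx.re := (auxSelf x).2.2 hx
    have hnyre : 0 ≤ ny.re := (auxSelf y).2.1
    have hcAre : 0 < cA.re := by
      rw [hcA, hA']
      exact auxPos hΛ x hx
    have r1 := congrArg Complex.re d1
    have r2 := congrArg Complex.re d2
    have hcd : c.re = d.re := by rw [hstar]; simp
    rw [Complex.sub_re, Complex.mul_re, Complex.mul_re, hnxim] at r1
    rw [Complex.mul_re, hnyim] at r2
    simp only [Complex.neg_re, Complex.neg_im, Complex.ofReal_re, Complex.ofReal_im,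
      neg_zero, zero_mul, sub_zero, mul_zero] at r1 r2
    -- r1 : -ρ * cA.re - c.re = μ.re * nx.re ; r2 : d.re = μ.re * ny.re
    have key : μ.re * (nx.re + ny.re) = -(ρ * cA.re) := by
      rw [hcd] at r1
      have hdist : μ.re * (nx.re + ny.re) = μ.re * nx.re + μ.re * ny.re := by ring
      linarith [r1, r2, hdist]
    have hS : 0 < nx.re + ny.re := by linarith
    by_contra hcon
    push_neg at hcon
    have h1 : 0 ≤ μ.re * (nx.re + ny.re) := mul_nonneg hcon (le_of_lt hS)
    have h2 : 0 < ρ * cA.re := mul_pos hρ hcAre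
    linarith
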